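/- Let (w_k)_{k≥1} be a sequence of nonnegative real numbers, let 0 < b < 1, let b' satisfy b ≤ b' < b + 1/2, and let C₁, C₂ ≥ 0. Assume w_{k+1} ≤ (1 − k^{−b})·w_k + C₁·k^{−(2b'−b)} + C₂·k^{−2b} for every integer k ≥ 1. Then there exists a constant C ≥ 0 such that w_k ≤ C·(k^{−2(b'−b)} + k^{−b}) for every integer k ≥ 1. -/

import Mathlib

open Real

lemma aux_step (c x : ℝ) (hc0 : 0 ≤ c) (hc1 : c ≤ 1) (hx : 1 ≤ x) :
    x ^ (-c) ≤ (x + 1) ^ (-c) + c * x ^ (-c - 1) := by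
  have hx0 : 0 < x := lt_of_lt_of_le one_pos hx
  have hx1 : 0 < x + 1 := by linarith
  have hB : (1 + 1 / x) ^ c ≤ 1 + c * (1 / x) :=
    rpow_one_add_le_one_add_mul_self (by have := one_div_pos.mpr hx0; linarith) hc0 hc1
  have hsplit : (x + 1) ^ c = x ^ c * (1 + 1 / x) ^ c := by
    rw [← Real.mul_rpow (le_of_lt hx0) (by positivity)]
    congr 1
    field_simp
  have hex : x ^ (-c) * (c / x) = c * x ^ (-c - 1) := by
    rw [show -c - 1 = -c + (-1) by ring, Real.rpow_add hx0, Real.rpow_neg_one]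
    field_simp
  by_cases hcx : 1 - c / x ≤ 0
  · have h2 : x ^ (-c) ≤ c * x ^ (-c - 1) := by
      rw [← hex]
      have hxc : 0 < x ^ (-c) := Real.rpow_pos_of_pos hx0 _
      nlinarith
    have hpos : (0:ℝ) ≤ (x + 1) ^ (-c) := Real.rpow_nonneg (le_of_lt hx1) _
    linarith
  push_neg at hcx
  have hA : 0 < x ^ c := Real.rpow_pos_of_pos hx0 c
  have hBp : 0 < (x + 1) ^ c := Real.rpow_pos_of_pos hx1 c
  have main : (1 - c / x) * (x + 1) ^ c ≤ x ^ c := by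
    calc (1 - c / x) * (x + 1) ^ c ≤ (1 - c / x) * (x ^ c * (1 + c * (1 / x))) := by
          apply mul_le_mul_of_nonneg_left _ (le_of_lt hcx)
          rw [hsplit]
          exact mul_le_mul_of_nonneg_left hB (le_of_lt hA)
      _ ≤ x ^ c := by
          have h1 : (1 - c / x) * (1 + c * (1 / x)) ≤ 1 := by
            have hcd : c / x = c * (1 / x) := by ring
            rw [hcd]
            nlinarith [sq_nonneg (c * (1 / x))]
          nlinarith
  have key : x ^ (-c) * (1 - c / x) ≤ (x + 1) ^ (-c) := by
    rw [Real.rpow_neg (le_of_lt hx0), Real.rpow_neg (le_of_lt hx1),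
      inv_eq_one_div, inv_eq_one_div, div_mul_eq_mul_div, div_le_div_iff₀ hA hBp]
    nlinarith [main]
  nlinarith [key, hex]

theorem stmt_2 (w : ℕ → ℝ) (b b' C₁ C₂ : ℝ)
    (hw : ∀ k : ℕ, 1 ≤ k → 0 ≤ w k)
    (hb : 0 < b) (hb1 : b < 1) (hbb' : b ≤ b') (hb' : b' < b + 1 / 2)
    (hC₁ : 0 ≤ C₁) (hC₂ : 0 ≤ C₂)
    (hrec : ∀ k : ℕ, 1 ≤ k →
      w (k + 1) ≤ (1 - (k : ℝ) ^ (-b)) * w k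
        + C₁ * (k : ℝ) ^ (-(2 * b' - b)) + C₂ * (k : ℝ) ^ (-(2 * b))) :
    ∃ C : ℝ, 0 ≤ C ∧ ∀ k : ℕ, 1 ≤ k →
      w k ≤ C * ((k : ℝ) ^ (-(2 * (b' - b))) + (k : ℝ) ^ (-b)) := by
  set α : ℝ := 2 * (b' - b) with hα
  have hα0 : 0 ≤ α := by simp [hα]; linarith
  have hα1 : α < 1 := by simp [hα]; linarith
  set C : ℝ := max (max (w 1 / 2) (C₁ / (1 - α))) (C₂ / (1 - b)) with hC
  have hC0 : 0 ≤ C := le_trans (div_nonneg hC₂ (by linarith)) (le_max_right _ _)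
  have hCw : w 1 / 2 ≤ C := le_trans (le_max_left _ _) (le_max_left _ _)
  have hCa : C * α + C₁ ≤ C := by
    have h1 : C₁ / (1 - α) ≤ C := le_trans (le_max_right _ _) (le_max_left _ _)
    have h2 : C₁ ≤ C * (1 - α) := by
      rw [div_le_iff₀ (by linarith : (0:ℝ) < 1 - α)] at h1
      linarith
    nlinarith
  have hCb : C * b + C₂ ≤ C := by
    have h1 : C₂ / (1 - b) ≤ C := le_max_right _ _
    have h2 : C₂ ≤ C * (1 - b) := by
      rw [div_le_iff₀ (by linarith : (0:ℝ) < 1 - b)] at h1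
      linarith
    nlinarith
  refine ⟨C, hC0, ?_⟩
  intro k hk
  induction k, hk using Nat.le_induction with
  | base =>
    have h1 : ((1:ℕ) : ℝ) = 1 := by norm_num
    rw [h1, Real.one_rpow, Real.one_rpow]
    linarith
  | succ k hk ih =>
    have hx : (1:ℝ) ≤ (k : ℝ) := by exact_mod_cast hk
    have hx0 : (0:ℝ) < (k : ℝ) := by linarith
    set x : ℝ := (k : ℝ) with hxdef
    have hcast : ((k + 1 : ℕ) : ℝ) = x + 1 := by push_cast; ring
    rw [hcast]
    -- exponents rewriting
    have e1 : -(2 * b' - b) = -α - b := by simp [hα]; ring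
    have e2 : -(2 * b) = -b - b := by ring
    have hrec' := hrec k hk
    rw [e1, e2] at hrec'
    -- nonneg facts
    have hb_le1 : x ^ (-b) ≤ 1 := Real.rpow_le_one_of_one_le_of_nonpos hx (by linarith)
    have hbpos : 0 ≤ x ^ (-b) := Real.rpow_nonneg (le_of_lt hx0) _
    have hwk := hw k hk
    -- first bound w k by C * (...)
    have step1 : (1 - x ^ (-b)) * w k ≤ (1 - x ^ (-b)) * (C * (x ^ (-α) + x ^ (-b))) :=
      mul_le_mul_of_nonneg_left ih (by linarith)
    -- product rules
    have p1 : x ^ (-b) * x ^ (-α) = x ^ (-α - b) := by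
      rw [← Real.rpow_add hx0]; ring_nf
    have p2 : x ^ (-b) * x ^ (-b) = x ^ (-b - b) := by
      rw [← Real.rpow_add hx0]; ring_nf
    -- decay comparisons
    have d1 : x ^ (-α) ≤ (x + 1) ^ (-α) + α * x ^ (-α - 1) := aux_step α x hα0 (le_of_lt hα1) hx
    have d2 : x ^ (-b) ≤ (x + 1) ^ (-b) + b * x ^ (-b - 1) := aux_step b x (le_of_lt hb) (le_of_lt hb1) hx
    have d3 : x ^ (-α - 1) ≤ x ^ (-α - b) :=
      Real.rpow_le_rpow_of_exponent_le hx (by linarith)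
    have d4 : x ^ (-b - 1) ≤ x ^ (-b - b) :=
      Real.rpow_le_rpow_of_exponent_le hx (by linarith)
    -- multiplied versions
    have m1 : C * x ^ (-α) ≤ C * ((x + 1) ^ (-α) + α * x ^ (-α - 1)) :=
      mul_le_mul_of_nonneg_left d1 hC0
    have m2 : C * x ^ (-b) ≤ C * ((x + 1) ^ (-b) + b * x ^ (-b - 1)) :=
      mul_le_mul_of_nonneg_left d2 hC0
    have m3 : C * α * x ^ (-α - 1) ≤ C * α * x ^ (-α - b) :=
      mul_le_mul_of_nonneg_left d3 (by positivity)
    have m4 : C * b * x ^ (-b - 1) ≤ C * b * x ^ (-b - b) :=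
      mul_le_mul_of_nonneg_left d4 (by positivity)
    -- combine
    have expand : (1 - x ^ (-b)) * (C * (x ^ (-α) + x ^ (-b)))
        = C * x ^ (-α) + C * x ^ (-b) - C * (x ^ (-b) * x ^ (-α)) - C * (x ^ (-b) * x ^ (-b)) := by
      ring
    rw [expand, p1, p2] at step1
    -- x^{-α-b} and x^{-b-b} coefficient inequalities
    have f1 : 0 ≤ x ^ (-α - b) := Real.rpow_nonneg (le_of_lt hx0) _
    have f2 : 0 ≤ x ^ (-b - b) := Real.rpow_nonneg (le_of_lt hx0) _
    have g1 : (C * α + C₁) * x ^ (-α - b) ≤ C * x ^ (-α - b) :=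
      mul_le_mul_of_nonneg_right hCa f1
    have g2 : (C * b + C₂) * x ^ (-b - b) ≤ C * x ^ (-b - b) :=
      mul_le_mul_of_nonneg_right hCb f2
    linarith [hrec', step1, m1, m2, m3, m4, g1, g2]
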